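/- In the reflection equation algebra O_q(SL₂), the quantum Cayley–Hamilton identity A² = tr_q(A)·A − q⁻²·1 holds entrywise, i.e.: (a¹₁)² + a¹₂a²₁ = (a¹₁ + q⁻²a²₂)a¹₁ − q⁻²; a¹₁a¹₂ + a¹₂a²₂ = (a¹₁ + q⁻²a²₂)a¹₂; a²₁a¹₁ + a²₂a²₁ = (a¹₁ + q⁻²a²₂)a²₁; and a²₁a¹₂ + (a²₂)² = (a¹₁ + q⁻²a²₂)a²₂ − q⁻². -/

import Mathlib

/-- Quantum Cayley–Hamilton identity `A² = tr_q(A)·A − q⁻²·1` holds entrywise in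
the reflection equation algebra `O_q(SL₂)`. -/
theorem stmt_11 {k : Type*} [Field k] (q : k) (hq : q ≠ 0)
    {A : Type*} [Ring A] [Algebra k A] (a11 a12 a21 a22 : A)
    (r1 : a12 * a11 = a11 * a12 + (1 - q⁻¹ ^ 2) • (a12 * a22))
    (r2 : a21 * a11 = a11 * a21 - (q⁻¹ ^ 2 * (1 - q⁻¹ ^ 2)) • (a21 * a22))
    (r3 : a21 * a12 = a12 * a21 + (1 - q⁻¹ ^ 2) • (a11 * a22 - a22 * a22))
    (r4 : a22 * a11 = a11 * a22)
    (r5 : a22 * a12 = q ^ 2 • (a12 * a22))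
    (r6 : a22 * a21 = q⁻¹ ^ 2 • (a21 * a22))
    (r7 : a11 * a22 = 1 + q ^ 2 • (a12 * a21)) :
    a11 * a11 + a12 * a21 = (a11 + q⁻¹ ^ 2 • a22) * a11 - q⁻¹ ^ 2 • (1 : A) ∧
    a11 * a12 + a12 * a22 = (a11 + q⁻¹ ^ 2 • a22) * a12 ∧
    a21 * a11 + a22 * a21 = (a11 + q⁻¹ ^ 2 • a22) * a21 ∧
    a21 * a12 + a22 * a22 = (a11 + q⁻¹ ^ 2 • a22) * a22 - q⁻¹ ^ 2 • (1 : A) := by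
  refine ⟨?_, ?_, ?_, ?_⟩
  · rw [add_mul, smul_mul_assoc, r4, r7]
    match_scalars <;> field_simp <;> ring
  · rw [add_mul, smul_mul_assoc, r5]
    match_scalars <;> field_simp
  · rw [add_mul, smul_mul_assoc, r6, r2]
    match_scalars <;> field_simp <;> ring
  · rw [add_mul, smul_mul_assoc, r3, r7]
    match_scalars <;> field_simp <;> ring
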